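/- Let n₁, n₂ be integers with n₁ > 4 and n₂ > 4, let n = n₁ + n₂, and let a₀ > 0 be a real constant. Then log Γ(n₁/2 + a₀) + log Γ(n₂/2 + a₀) - log Γ(n/2 + a₀) ≥ 2(1 - log 2) - a₀ + (1/2 + a₀)·log(n/2 + a₀) + Σ_{l=1}^{2} [ ((n_l/2) + a₀)·log((n_l + 2a₀)/(n + 2a₀)) - (1/2)·log(n_l/2 + a₀) ]. -/

import Mathlib

open Real

lemma sqrtpi_le_stirling (n : ℕ) (hn : 1 ≤ n) : Real.sqrt π ≤ Stirling.stirlingSeq n := by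
  obtain ⟨m, rfl⟩ := Nat.exists_eq_add_of_le hn
  have h := Stirling.stirlingSeq'_antitone.le_of_tendsto
    (Stirling.tendsto_stirlingSeq_sqrt_pi.comp (Filter.tendsto_add_atTop_nat 1)) m
  simpa [Function.comp, Nat.succ_eq_add_one, Nat.add_comm] using h

lemma stirling_le (n : ℕ) (hn : 1 ≤ n) : Stirling.stirlingSeq n ≤ exp 1 / Real.sqrt 2 := by
  obtain ⟨m, rfl⟩ := Nat.exists_eq_add_of_le hn
  have h := Stirling.stirlingSeq'_antitone (Nat.zero_le m)
  simpa [Function.comp, Stirling.stirlingSeq_one, Nat.add_comm] using h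

lemma log_factorial_ge (n : ℕ) (hn : 1 ≤ n) :
    (1/2)*Real.log (2*π) + ((n:ℝ)+1/2)*Real.log n - n ≤ Real.log (Nat.factorial n : ℝ) := by
  have hn0 : (0:ℝ) < n := by exact_mod_cast hn
  have hd : (0:ℝ) < Real.sqrt (2*n) * ((n:ℝ)/exp 1)^n := by positivity
  have hfact : (Nat.factorial n : ℝ) = Stirling.stirlingSeq n * (Real.sqrt (2*n) * ((n:ℝ)/exp 1)^n) := by
    rw [Stirling.stirlingSeq]; field_simp
  have hge : Real.sqrt π * (Real.sqrt (2*n) * ((n:ℝ)/exp 1)^n) ≤ (Nat.factorial n : ℝ) := by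
    rw [hfact]
    exact mul_le_mul_of_nonneg_right (sqrtpi_le_stirling n hn) hd.le
  have h1 : Real.log (Real.sqrt π * (Real.sqrt (2*n) * ((n:ℝ)/exp 1)^n)) ≤ Real.log (Nat.factorial n : ℝ) :=
    Real.log_le_log (by positivity) hge
  have h2 : Real.log (Real.sqrt π * (Real.sqrt (2*n) * ((n:ℝ)/exp 1)^n))
      = (1/2)*Real.log π + ((1/2)*(Real.log 2 + Real.log n) + n*(Real.log n - 1)) := by
    rw [Real.log_mul (by positivity) (by positivity), Real.log_mul (by positivity) (by positivity),
      Real.log_sqrt pi_pos.le, Real.log_sqrt (by positivity), Real.log_pow,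
      Real.log_div (by positivity) (exp_ne_zero 1), Real.log_exp,
      Real.log_mul (by norm_num) (by positivity)]
    ring
  have h3 : Real.log (2*π) = Real.log 2 + Real.log π := Real.log_mul (by norm_num) pi_ne_zero
  rw [h3]; rw [h2] at h1; linarith

lemma log_factorial_le (n : ℕ) (hn : 1 ≤ n) :
    Real.log (Nat.factorial n : ℝ) ≤ 1 + ((n:ℝ)+1/2)*Real.log n - n := by
  have hn0 : (0:ℝ) < n := by exact_mod_cast hn
  have hd : (0:ℝ) < Real.sqrt (2*n) * ((n:ℝ)/exp 1)^n := by positivity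
  have hfact : (Nat.factorial n : ℝ) = Stirling.stirlingSeq n * (Real.sqrt (2*n) * ((n:ℝ)/exp 1)^n) := by
    rw [Stirling.stirlingSeq]; field_simp
  have hle : (Nat.factorial n : ℝ) ≤ (exp 1 / Real.sqrt 2) * (Real.sqrt (2*n) * ((n:ℝ)/exp 1)^n) := by
    rw [hfact]
    exact mul_le_mul_of_nonneg_right (stirling_le n hn) hd.le
  have h1 : Real.log (Nat.factorial n : ℝ) ≤ Real.log ((exp 1 / Real.sqrt 2) * (Real.sqrt (2*n) * ((n:ℝ)/exp 1)^n)) :=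
    Real.log_le_log (by positivity) hle
  have h2 : Real.log ((exp 1 / Real.sqrt 2) * (Real.sqrt (2*n) * ((n:ℝ)/exp 1)^n))
      = (1 - (1/2)*Real.log 2) + ((1/2)*(Real.log 2 + Real.log n) + n*(Real.log n - 1)) := by
    rw [Real.log_mul (by positivity) (by positivity), Real.log_mul (by positivity) (by positivity),
      Real.log_div (exp_ne_zero 1) (by positivity),
      Real.log_sqrt (by norm_num), Real.log_sqrt (by positivity), Real.log_pow,
      Real.log_div (by positivity) (exp_ne_zero 1), Real.log_exp,
      Real.log_mul (by norm_num) (by positivity)]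
    ring
  rw [h2] at h1; linarith

lemma cubic_hasDeriv (v : ℝ) (hv0 : (0:ℝ) < 1 + v) :
    HasDerivAt (fun v : ℝ => v - v^2/2 + v^3/3 - Real.log (1+v))
      (1 - 2*v/2 + 3*v^2/3 - (1/(1+v))) v := by
  have h1 : HasDerivAt (fun v : ℝ => Real.log (1+v)) (1/(1+v)) v := by
    have := (Real.hasDerivAt_log hv0.ne').comp v ((hasDerivAt_id v).const_add 1)
    simpa [Function.comp_def] using this
  have h2 : HasDerivAt (fun v : ℝ => v - v^2/2 + v^3/3) (1 - 2*v/2 + 3*v^2/3) v := by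
    have := (((hasDerivAt_id v).sub (((hasDerivAt_pow 2 v).div_const 2))).add
      ((hasDerivAt_pow 3 v).div_const 3))
    simpa [Pi.add_def, Pi.sub_def] using this
  simpa [Pi.sub_def] using h2.sub h1

lemma log_le_cubic (u : ℝ) (hu : 0 ≤ u) : Real.log (1+u) ≤ u - u^2/2 + u^3/3 := by
  have h : MonotoneOn (fun v : ℝ => v - v^2/2 + v^3/3 - Real.log (1+v)) (Set.Ici 0) := by
    apply monotoneOn_of_deriv_nonneg (convex_Ici 0)
    · exact fun v hv => ((cubic_hasDeriv v (by simp only [Set.mem_Ici] at hv; linarith)).continuousAt).continuousWithinAt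
    · intro v hv
      simp only [interior_Ici, Set.mem_Ioi] at hv
      exact ((cubic_hasDeriv v (by linarith)).differentiableAt).differentiableWithinAt
    · intro v hv
      simp only [interior_Ici, Set.mem_Ioi] at hv
      have hv0 : (0:ℝ) < 1 + v := by linarith
      rw [(cubic_hasDeriv v hv0).deriv]
      rw [sub_nonneg, div_le_iff₀ hv0]
      nlinarith [pow_nonneg hv.le 3]
  have h2 := h (Set.self_mem_Ici) (Set.mem_Ici.mpr hu) hu
  simp at h2
  linarith

lemma D1 (t s : ℝ) (ht : 2 ≤ t) (hs0 : 0 ≤ s) (hs1 : s ≤ 1) :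
    (t + 1/2) * Real.log (1 + s/t) ≤ s + 1/16 := by
  have ht0 : (0:ℝ) < t := by linarith
  have hu : (0:ℝ) ≤ s/t := by positivity
  have h := log_le_cubic (s/t) hu
  have key : (t + 1/2) * (s/t - (s/t)^2/2 + (s/t)^3/3) ≤ s + 1/16 := by
    have h6 : (t + 1/2) * (s/t - (s/t)^2/2 + (s/t)^3/3)
        = ((t + 1/2) * (6*t^2*s - 3*t*s^2 + 2*s^3)) / (6*t^3) := by
      field_simp; ring
    rw [h6, div_le_iff₀ (by positivity : (0:ℝ) < 6*t^3)]
    have hr : (0:ℝ) ≤ t - 2 := by linarith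
    have h19 : (0:ℝ) ≤ 19/10 - s := by linarith
    have hB0 : (0:ℝ) ≤ 3 - 12*s + 15*s^2 - 5*s^3 := by
      nlinarith [mul_nonneg h19 (sq_nonneg (s - 11/20)), sq_nonneg (s - 11/20)]
    have hB1 : (0:ℝ) ≤ 9/2 - 12*s + (27/2)*s^2 - 2*s^3 := by
      nlinarith [sq_nonneg (s - 12/23), mul_nonneg (mul_nonneg hs0 hs0) (sub_nonneg.mpr hs1)]
    have hB2 : (0:ℝ) ≤ 9/4 - 3*s + 3*s^2 := by nlinarith [sq_nonneg (s - 1/2)]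
    have p1 : (0:ℝ) ≤ (9/2 - 12*s + (27/2)*s^2 - 2*s^3) * (t - 2) := mul_nonneg hB1 hr
    have p2 : (0:ℝ) ≤ (9/4 - 3*s + 3*s^2) * ((t-2)*(t-2)) :=
      mul_nonneg hB2 (mul_self_nonneg _)
    have p3 : (0:ℝ) ≤ (3/8) * ((t-2)*(t-2)*(t-2)) := by positivity
    nlinarith [hB0, p1, p2, p3]
  calc (t + 1/2) * Real.log (1 + s/t) ≤ (t + 1/2) * (s/t - (s/t)^2/2 + (s/t)^3/3) :=
        mul_le_mul_of_nonneg_left h (by linarith)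
    _ ≤ s + 1/16 := key

lemma D2 (t s : ℝ) (ht : 5 ≤ t) (hs0 : 0 ≤ s) (hs1 : s ≤ 1) :
    s - (t + s - 1/2) * Real.log (1 + s/t) ≤ 1/12 := by
  have ht0 : (0:ℝ) < t := by linarith
  have hx0 : (0:ℝ) < 1 + s/t := by positivity
  have hlog : 1 - (1 + s/t)⁻¹ ≤ Real.log (1 + s/t) := Real.one_sub_inv_le_log_of_pos hx0
  have hinv : (1 + s/t)⁻¹ = t/(t+s) := by
    rw [inv_eq_one_div]; field_simp
  rw [hinv] at hlog
  have h1 : 1 - t/(t+s) = s/(t+s) := by field_simp; ring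
  rw [h1] at hlog
  have hts : (0:ℝ) < t + s := by linarith
  have hcoef : (0:ℝ) ≤ t + s - 1/2 := by linarith
  have h2 : (t + s - 1/2) * (s/(t+s)) ≤ (t + s - 1/2) * Real.log (1 + s/t) :=
    mul_le_mul_of_nonneg_left hlog hcoef
  have he : s - (t + s - 1/2) * (s/(t+s)) = s / (2*(t+s)) := by
    field_simp; ring
  have h3 : s - (t + s - 1/2) * (s/(t+s)) ≤ 1/12 := by
    rw [he, div_le_iff₀ (by positivity : (0:ℝ) < 2*(t+s))]
    linarith
  linarith

lemma Gamma_log_ge (x : ℝ) (hx : 2 ≤ x) :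
    (x - 1/2)*Real.log x - x + ((1/2)*Real.log (2*π) - 1/16) ≤ Real.log (Real.Gamma x) := by
  have hx0 : (0:ℝ) < x := by linarith
  set n : ℕ := ⌊x⌋₊ with hn
  have hn2 : 2 ≤ n := Nat.le_floor (by exact_mod_cast hx)
  have hN2 : (2:ℝ) ≤ (n:ℝ) := by exact_mod_cast hn2
  have hnx : (n:ℝ) ≤ x := Nat.floor_le hx0.le
  have hxn1 : x < (n:ℝ) + 1 := Nat.lt_floor_add_one x
  set s : ℝ := x - n with hs
  have hs0 : 0 ≤ s := by simp [hs]; linarith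
  have hs1 : s ≤ 1 := by simp [hs]; linarith
  have hN0 : (0:ℝ) < n := by linarith
  -- convexity : log n! ≤ log Γ x + (1-s) * log x
  have hconv := Real.convexOn_log_Gamma.2 (Set.mem_Ioi.mpr hx0)
    (Set.mem_Ioi.mpr (by linarith : (0:ℝ) < x + 1)) hs0 (by linarith : (0:ℝ) ≤ 1 - s)
    (by ring)
  have harg : s • x + (1 - s) • (x + 1) = (n:ℝ) + 1 := by
    simp only [smul_eq_mul]; simp only [hs]; ring
  rw [harg] at hconv
  have hGn1 : Real.Gamma ((n:ℝ) + 1) = (Nat.factorial n : ℝ) := Real.Gamma_nat_eq_factorial n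
  have hGx1 : Real.Gamma (x + 1) = x * Real.Gamma x := Real.Gamma_add_one hx0.ne'
  have hGxpos : 0 < Real.Gamma x := Real.Gamma_pos_of_pos hx0
  simp only [Function.comp_apply, smul_eq_mul, hGn1, hGx1] at hconv
  rw [Real.log_mul hx0.ne' hGxpos.ne'] at hconv
  -- hconv : log n! ≤ s * log Γ x + (1-s) * (log x + log Γ x)
  have hfac := log_factorial_ge n (by omega)
  -- D1
  have hd1 := D1 (n:ℝ) s hN2 hs0 hs1
  have hlog : Real.log (1 + s/(n:ℝ)) = Real.log x - Real.log (n:ℝ) := by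
    rw [← Real.log_div hx0.ne' hN0.ne']
    congr 1
    field_simp [hs]
    linarith
  rw [hlog] at hd1
  rw [hs] at hconv hd1
  nlinarith [hd1, hfac, hconv]

lemma Gamma_log_le (x : ℝ) (hx : 5 ≤ x) :
    Real.log (Real.Gamma x) ≤ (x - 1/2)*Real.log x - x + 13/12 := by
  have hx0 : (0:ℝ) < x := by linarith
  set n : ℕ := ⌊x⌋₊ with hn
  have hn5 : 5 ≤ n := Nat.le_floor (by exact_mod_cast hx)
  have hN5 : (5:ℝ) ≤ (n:ℝ) := by exact_mod_cast hn5
  have hnx : (n:ℝ) ≤ x := Nat.floor_le hx0.le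
  have hxn1 : x < (n:ℝ) + 1 := Nat.lt_floor_add_one x
  set s : ℝ := x - n with hs
  have hs0 : 0 ≤ s := by simp [hs]; linarith
  have hs1 : s ≤ 1 := by simp [hs]; linarith
  have hN0 : (0:ℝ) < n := by linarith
  have hconv := Real.convexOn_log_Gamma.2 (Set.mem_Ioi.mpr (by linarith : (0:ℝ) < (n:ℝ)))
    (Set.mem_Ioi.mpr (by linarith : (0:ℝ) < (n:ℝ) + 1)) (by linarith : (0:ℝ) ≤ 1 - s) hs0
    (by ring)
  have harg : (1 - s) • (n:ℝ) + s • ((n:ℝ) + 1) = x := by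
    simp only [smul_eq_mul]; simp only [hs]; ring
  rw [harg] at hconv
  have hGn1 : Real.Gamma ((n:ℝ) + 1) = (Nat.factorial n : ℝ) := Real.Gamma_nat_eq_factorial n
  have hGn : Real.Gamma ((n:ℝ)) = (Nat.factorial (n-1) : ℝ) := by
    have h1 : ((n:ℝ)) = ((n-1:ℕ):ℝ) + 1 := by
      have : (n-1) + 1 = n := by omega
      rw [← this]; push_cast; ring
    rw [h1]; exact Real.Gamma_nat_eq_factorial (n-1)
  have hfacsucc : (Nat.factorial n : ℝ) = (n:ℝ) * (Nat.factorial (n-1) : ℝ) := by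
    have : n.factorial = n * (n-1).factorial := by
      conv_lhs => rw [show n = (n-1)+1 by omega]
      rw [Nat.factorial_succ]
      congr 1; omega
    rw [this]; push_cast; ring
  have hfm1 : Real.log (Nat.factorial (n-1) : ℝ)
      = Real.log (Nat.factorial n : ℝ) - Real.log (n:ℝ) := by
    rw [hfacsucc, Real.log_mul hN0.ne' (by positivity)]
    ring
  simp only [Function.comp_apply, smul_eq_mul, hGn1, hGn] at hconv
  rw [hfm1] at hconv
  have hfac := log_factorial_le n (by omega)
  have hd2 := D2 (n:ℝ) s hN5 hs0 hs1
  have hlog : Real.log (1 + s/(n:ℝ)) = Real.log x - Real.log (n:ℝ) := by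
    rw [← Real.log_div hx0.ne' hN0.ne']
    congr 1
    field_simp [hs]
    linarith
  rw [hlog] at hd2
  rw [hs] at hconv hd2
  nlinarith [hd2, hfac, hconv]

lemma numeric_const : 2 - 2*Real.log 2 ≤ 2*((1/2)*Real.log (2*π) - 1/16) - 13/12 := by
  have hl2 : (0.6931471803:ℝ) < Real.log 2 := Real.log_two_gt_d9
  have he : Real.exp 1 < 2.7182818286 := Real.exp_one_lt_d9
  have hpi : (3.141592:ℝ) < π := Real.pi_gt_d6
  have h2 : (0:ℝ) < π / Real.exp 1 := by positivity
  have h3 := Real.one_sub_inv_le_log_of_pos h2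
  rw [Real.log_div pi_ne_zero (Real.exp_ne_zero 1), Real.log_exp, inv_div] at h3
  have h5 : Real.exp 1 / π ≤ (2.7182818286:ℝ)/3.141592 := by
    exact div_le_div₀ (by norm_num) he.le (by norm_num) hpi.le
  have h6 : (2.7182818286:ℝ)/3.141592 ≤ 0.8653 := by norm_num
  have hlogpi : (1.1347:ℝ) ≤ Real.log π := by linarith
  have hl2pi : Real.log (2*π) = Real.log 2 + Real.log π :=
    Real.log_mul (by norm_num) pi_ne_zero
  rw [hl2pi]
  linarith

theorem logGamma_sum_lower (n₁ n₂ : ℕ) (h₁ : 4 < n₁) (h₂ : 4 < n₂) (a₀ : ℝ) (ha : 0 < a₀) :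
    Real.log (Real.Gamma ((n₁ : ℝ) / 2 + a₀)) + Real.log (Real.Gamma ((n₂ : ℝ) / 2 + a₀))
      - Real.log (Real.Gamma (((n₁ : ℝ) + (n₂ : ℝ)) / 2 + a₀)) ≥
    2 * (1 - Real.log 2) - a₀ + (1 / 2 + a₀) * Real.log (((n₁ : ℝ) + (n₂ : ℝ)) / 2 + a₀)
      + ((((n₁ : ℝ) / 2) + a₀) *
            Real.log (((n₁ : ℝ) + 2 * a₀) / ((n₁ : ℝ) + (n₂ : ℝ) + 2 * a₀))
          - (1 / 2) * Real.log ((n₁ : ℝ) / 2 + a₀))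
      + ((((n₂ : ℝ) / 2) + a₀) *
            Real.log (((n₂ : ℝ) + 2 * a₀) / ((n₁ : ℝ) + (n₂ : ℝ) + 2 * a₀))
          - (1 / 2) * Real.log ((n₂ : ℝ) / 2 + a₀)) := by
  have hn1 : (5:ℝ) ≤ (n₁:ℝ) := by exact_mod_cast h₁
  have hn2 : (5:ℝ) ≤ (n₂:ℝ) := by exact_mod_cast h₂
  have hApos : (0:ℝ) < (n₁:ℝ)/2 + a₀ := by linarith
  have hBpos : (0:ℝ) < (n₂:ℝ)/2 + a₀ := by linarith
  have hCpos : (0:ℝ) < ((n₁:ℝ)+(n₂:ℝ))/2 + a₀ := by linarith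
  have hGA := Gamma_log_ge ((n₁:ℝ)/2 + a₀) (by linarith)
  have hGB := Gamma_log_ge ((n₂:ℝ)/2 + a₀) (by linarith)
  have hGC := Gamma_log_le (((n₁:ℝ)+(n₂:ℝ))/2 + a₀) (by linarith)
  have hnum := numeric_const
  have e1 : ((n₁:ℝ) + 2*a₀)/((n₁:ℝ)+(n₂:ℝ)+2*a₀)
      = ((n₁:ℝ)/2 + a₀)/(((n₁:ℝ)+(n₂:ℝ))/2 + a₀) := by
    rw [div_eq_div_iff (by linarith) hCpos.ne']; ring
  have e2 : ((n₂:ℝ) + 2*a₀)/((n₁:ℝ)+(n₂:ℝ)+2*a₀)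
      = ((n₂:ℝ)/2 + a₀)/(((n₁:ℝ)+(n₂:ℝ))/2 + a₀) := by
    rw [div_eq_div_iff (by linarith) hCpos.ne']; ring
  rw [e1, e2, Real.log_div hApos.ne' hCpos.ne', Real.log_div hBpos.ne' hCpos.ne']
  nlinarith [hGA, hGB, hGC, hnum]
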